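/- Let M be a smooth manifold and γ : ℝ → M a smooth map. Then there exist a lazy path δ : ℝ → M (smooth and constant on (−∞, ε] and on [1 − ε, ∞) for some ε ∈ (0, 1/2)) with δ(0) = γ(0) and δ(1) = γ(1), and a smooth map H : ℝ × ℝ → M with H(0, t) = γ(t) and H(1, t) = δ(t) for all t, H(s, 0) = γ(0) and H(s, 1) = γ(1) for all s, such that at every point the derivative (mfderiv) of H has rank at most 1. In other words, every smooth path is thinly homotopic, relative to its endpoints, to a lazy path. -/

import Mathlib

set_option maxHeartbeats 1000000

open scoped Manifold

/-- every smooth path is thinly homotopic, relative to its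
endpoints, to a lazy path: for every smooth `γ : ℝ → M` there exist
`ε ∈ (0, 1/2)`, a smooth `δ : ℝ → M` constant on `(−∞, ε]` and on
`[1 − ε, ∞)` with the same endpoints as `γ`, and a smooth homotopy `F` from
`γ` to `δ` fixing the endpoints whose derivative (`mfderiv`) has rank at most
`1` at every point. -/
private lemma rank_aux {E : Type*} [NormedAddCommGroup E]
    [NormedSpace ℝ E] {H : Type*} [TopologicalSpace H]
    (I : ModelWithCorners ℝ E H)
    {M : Type*} [TopologicalSpace M] [ChartedSpace H M]
    [IsManifold I (⊤ : ℕ∞) M]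
    (γ : ℝ → M) (hγ : ContMDiff 𝓘(ℝ, ℝ) I (⊤ : ℕ∞) γ)
    (g : ℝ × ℝ → ℝ) (hg : ContMDiff 𝓘(ℝ, ℝ × ℝ) 𝓘(ℝ, ℝ) (⊤ : ℕ∞) g) (p : ℝ × ℝ) :
    LinearMap.rank (mfderiv 𝓘(ℝ, ℝ × ℝ) I (γ ∘ g) p).toLinearMap ≤ 1 := by
  have hgm : MDifferentiableAt 𝓘(ℝ, ℝ × ℝ) 𝓘(ℝ, ℝ) g p := (hg.mdifferentiable (by simp)) p
  have hγm : MDifferentiableAt 𝓘(ℝ, ℝ) I γ (g p) := (hγ.mdifferentiable (by simp)) (g p)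
  rw [mfderiv_comp p hγm hgm, ContinuousLinearMap.toLinearMap_comp]
  have h1 := LinearMap.lift_rank_comp_le_right
    ((mfderiv 𝓘(ℝ, ℝ × ℝ) 𝓘(ℝ, ℝ) g p).toLinearMap)
    ((mfderiv 𝓘(ℝ, ℝ) I γ (g p)).toLinearMap)
  have h2 : LinearMap.rank ((mfderiv 𝓘(ℝ, ℝ × ℝ) 𝓘(ℝ, ℝ) g p).toLinearMap) ≤ 1 :=
    (LinearMap.rank_le_range _).trans (Module.rank_self ℝ).le
  have h3 := h1.trans ((Cardinal.lift_le.mpr h2).trans_eq Cardinal.lift_one)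
  rw [Cardinal.lift_le_one_iff] at h3
  exact h3

theorem smooth_path_thinly_homotopic_to_lazy {E : Type*} [NormedAddCommGroup E]
    [NormedSpace ℝ E] {H : Type*} [TopologicalSpace H]
    (I : ModelWithCorners ℝ E H)
    {M : Type*} [TopologicalSpace M] [ChartedSpace H M]
    [IsManifold I (⊤ : ℕ∞) M]
    (γ : ℝ → M) (hγ : ContMDiff 𝓘(ℝ, ℝ) I (⊤ : ℕ∞) γ) :
    ∃ ε ∈ Set.Ioo (0 : ℝ) (1 / 2), ∃ δ : ℝ → M,
      ContMDiff 𝓘(ℝ, ℝ) I (⊤ : ℕ∞) δ ∧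
      (∀ t ≤ ε, δ t = δ 0) ∧ (∀ t, 1 - ε ≤ t → δ t = δ 1) ∧
      δ 0 = γ 0 ∧ δ 1 = γ 1 ∧
      ∃ F : ℝ × ℝ → M,
        ContMDiff 𝓘(ℝ, ℝ × ℝ) I (⊤ : ℕ∞) F ∧
        (∀ t : ℝ, F (0, t) = γ t) ∧
        (∀ t : ℝ, F (1, t) = δ t) ∧
        (∀ s : ℝ, F (s, 0) = γ 0) ∧
        (∀ s : ℝ, F (s, 1) = γ 1) ∧
        (∀ p : ℝ × ℝ,
          LinearMap.rank (mfderiv 𝓘(ℝ, ℝ × ℝ) I F p).toLinearMap ≤ 1) := by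
  set φ : ℝ → ℝ := fun t => Real.smoothTransition (2 * t - 1 / 2) with hφdef
  have hφsm : ContDiff ℝ (↑(⊤:ℕ∞)) φ := by
    exact Real.smoothTransition.contDiff.comp (by fun_prop)
  have hφ0 : φ 0 = 0 := Real.smoothTransition.zero_of_nonpos (by norm_num)
  have hφ1 : φ 1 = 1 := Real.smoothTransition.one_of_one_le (by norm_num)
  set g : ℝ × ℝ → ℝ := fun p => (1 - p.1) * p.2 + p.1 * φ p.2 with hgdef
  have hgsm : ContDiff ℝ (↑(⊤:ℕ∞)) g := by
    apply ContDiff.add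
    · exact (contDiff_const.sub contDiff_fst).mul contDiff_snd
    · exact contDiff_fst.mul (hφsm.comp contDiff_snd)
  refine ⟨1/4, by norm_num, γ ∘ φ, hγ.comp (hφsm.contMDiff), ?_, ?_, by simp [hφ0],
    by simp [hφ1], γ ∘ g, hγ.comp (hgsm.contMDiff), ?_, ?_, ?_, ?_, ?_⟩
  · intro t ht
    have : φ t = 0 := Real.smoothTransition.zero_of_nonpos (by linarith)
    simp [this, hφ0]
  · intro t ht
    have : φ t = 1 := Real.smoothTransition.one_of_one_le (by linarith)
    simp [this, hφ1]
  · intro t; simp [hgdef]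
  · intro t; simp [hgdef]
  · intro s; simp [hgdef, hφ0]
  · intro s; simp [hgdef, hφ1]
  · exact rank_aux I γ hγ g (contMDiff_iff_contDiff.mpr hgsm)
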